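/- Let ρ, T > 0 and √ρ T − 2 tanh(√ρ T/2) > 0 (which always holds). For c₃ = (√ρ y − x tanh(√ρT/2))/(√ρT − 2 tanh(√ρT/2)), c₁ = (x − c₃)/sinh(√ρT), c₂ = −c₃/sinh(√ρT), the function δ(t) = c₁ sinh(√ρ t) + c₂ sinh(√ρ(T−t)) + c₃ satisfies δ(0) = 0, δ(T) = x, and ∫₀ᵀ δ(t) dt = y. -/

import Mathlib

open Real

lemma sinh_lt_mul_cosh {u : ℝ} (hu : 0 < u) : Real.sinh u < u * Real.cosh u := by
  have h : StrictMonoOn (fun v : ℝ => v * Real.cosh v - Real.sinh v) (Set.Ici 0) := by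
    apply strictMonoOn_of_deriv_pos (convex_Ici 0)
    · fun_prop
    · intro x hx
      rw [interior_Ici] at hx
      have hd : HasDerivAt (fun v : ℝ => v * Real.cosh v - Real.sinh v)
          (x * Real.sinh x) x := by
        have h1 := (hasDerivAt_id x).mul (Real.hasDerivAt_cosh x)
        have h2 := Real.hasDerivAt_sinh x
        have h3 : HasDerivAt (fun v : ℝ => v * Real.cosh v - Real.sinh v)
            (1 * Real.cosh x + id x * Real.sinh x - Real.cosh x) x := h1.sub h2
        convert h3 using 1
        simp [id]
      rw [hd.deriv]
      exact mul_pos hx (Real.sinh_pos_iff.2 hx)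
  have := h Set.self_mem_Ici (Set.mem_Ici.2 hu.le) hu
  simpa using this

lemma my_tanh_lt_self {u : ℝ} (hu : 0 < u) : Real.tanh u < u := by
  rw [Real.tanh_eq_sinh_div_cosh, div_lt_iff₀ (Real.cosh_pos u)]
  exact sinh_lt_mul_cosh hu

theorem EL_solution_constraints (ρ T x y : ℝ) (hρ : 0 < ρ) (hT : 0 < T)
    (c₁ c₂ c₃ : ℝ)
    (hc₃ : c₃ = (Real.sqrt ρ * y - x * tanh (Real.sqrt ρ * T / 2)) /
      (Real.sqrt ρ * T - 2 * tanh (Real.sqrt ρ * T / 2)))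
    (hc₁ : c₁ = (x - c₃) / sinh (Real.sqrt ρ * T))
    (hc₂ : c₂ = -c₃ / sinh (Real.sqrt ρ * T))
    (δ : ℝ → ℝ)
    (hδ : δ = fun t => c₁ * sinh (Real.sqrt ρ * t) + c₂ * sinh (Real.sqrt ρ * (T - t)) + c₃) :
    δ 0 = 0 ∧ δ T = x ∧ (∫ t in (0 : ℝ)..T, δ t) = y := by
  set s := Real.sqrt ρ with hs
  have hs0 : 0 < s := Real.sqrt_pos.2 hρ
  have hsT : 0 < s * T := mul_pos hs0 hT
  have hsinh : Real.sinh (s * T) ≠ 0 := ne_of_gt (Real.sinh_pos_iff.2 hsT)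
  have hu : 0 < s * T / 2 := by linarith
  have hshu : Real.sinh (s * T / 2) ≠ 0 := ne_of_gt (Real.sinh_pos_iff.2 hu)
  have hchu : Real.cosh (s * T / 2) ≠ 0 := ne_of_gt (Real.cosh_pos _)
  have hden : s * T - 2 * Real.tanh (s * T / 2) ≠ 0 := by
    have := my_tanh_lt_self hu
    nlinarith
  have htanh : Real.tanh (s * T / 2) = Real.sinh (s * T / 2) / Real.cosh (s * T / 2) :=
    Real.tanh_eq_sinh_div_cosh _
  have htc : Real.tanh (s * T / 2) * Real.cosh (s * T / 2) = Real.sinh (s * T / 2) := by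
    rw [htanh]; field_simp
  refine ⟨?_, ?_, ?_⟩
  · simp [hδ, hc₂, div_mul_cancel₀, hsinh]
  · simp only [hδ, hc₁, sub_self, Real.sinh_zero, mul_zero, zero_add]
    field_simp
    ring
  · have Isinh : ∀ b : ℝ, (∫ u in (0:ℝ)..b, Real.sinh u) = Real.cosh b - 1 := by
      intro b
      have := intervalIntegral.integral_eq_sub_of_hasDerivAt
        (f := Real.cosh) (f' := Real.sinh) (a := 0) (b := b)
        (fun u _ => Real.hasDerivAt_cosh u)
        ((Real.continuous_sinh).intervalIntegrable 0 b)
      simpa using this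
    have I1 : (∫ t in (0:ℝ)..T, Real.sinh (s * t)) = (Real.cosh (s * T) - 1) / s := by
      rw [intervalIntegral.integral_comp_mul_left _ (ne_of_gt hs0)]
      simp [Isinh, div_eq_inv_mul]
    have I2 : (∫ t in (0:ℝ)..T, Real.sinh (s * (T - t))) = (Real.cosh (s * T) - 1) / s := by
      have h := intervalIntegral.integral_comp_sub_left (fun u => Real.sinh (s * u)) T
        (a := 0) (b := T)
      rw [h]
      simpa using I1
    have h1 : IntervalIntegrable (fun t => c₁ * Real.sinh (s * t)) MeasureTheory.volume 0 T :=
      Continuous.intervalIntegrable (by fun_prop) 0 T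
    have h2 : IntervalIntegrable (fun t => c₂ * Real.sinh (s * (T - t))) MeasureTheory.volume 0 T :=
      Continuous.intervalIntegrable (by fun_prop) 0 T
    have h3 : IntervalIntegrable (fun _ : ℝ => c₃) MeasureTheory.volume 0 T :=
      intervalIntegrable_const
    rw [hδ]
    rw [show (fun t => c₁ * Real.sinh (s * t) + c₂ * Real.sinh (s * (T - t)) + c₃)
        = fun t => (c₁ * Real.sinh (s * t) + c₂ * Real.sinh (s * (T - t))) + c₃ from rfl]
    rw [intervalIntegral.integral_add (h1.add h2) h3,
      intervalIntegral.integral_add h1 h2,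
      intervalIntegral.integral_const_mul, intervalIntegral.integral_const_mul, I1, I2,
      intervalIntegral.integral_const]
    have hch : Real.cosh (s * T) - 1 = 2 * Real.sinh (s * T / 2) ^ 2 := by
      have h := Real.cosh_two_mul (s * T / 2)
      rw [show 2 * (s * T / 2) = s * T by ring] at h
      rw [h, Real.cosh_sq]
      ring
    have hsh : Real.sinh (s * T) = 2 * Real.sinh (s * T / 2) * Real.cosh (s * T / 2) := by
      have h := Real.sinh_two_mul (s * T / 2)
      rw [show 2 * (s * T / 2) = s * T by ring] at h
      exact h
    have e0 : c₃ * (s * T - 2 * Real.tanh (s * T / 2)) =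
        s * y - x * Real.tanh (s * T / 2) := by
      rw [hc₃, div_mul_cancel₀ _ hden]
    have e3 : c₃ * (s * T * Real.cosh (s * T / 2) - 2 * Real.sinh (s * T / 2)) =
        s * y * Real.cosh (s * T / 2) - x * Real.sinh (s * T / 2) := by
      linear_combination Real.cosh (s * T / 2) * e0 + (2 * c₃ - x) * htc
    rw [hc₁, hc₂, hch, hsh, smul_eq_mul]
    rw [show (x - c₃) / (2 * Real.sinh (s * T / 2) * Real.cosh (s * T / 2)) *
          (2 * Real.sinh (s * T / 2) ^ 2 / s) +
        -c₃ / (2 * Real.sinh (s * T / 2) * Real.cosh (s * T / 2)) *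
          (2 * Real.sinh (s * T / 2) ^ 2 / s) + (T - 0) * c₃
      = ((x - 2 * c₃) * Real.sinh (s * T / 2) + T * c₃ * s * Real.cosh (s * T / 2)) /
          (s * Real.cosh (s * T / 2)) by field_simp; ring]
    rw [div_eq_iff (by positivity)]
    linear_combination e3
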